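/- Given a well-founded ordering >_S on sorts, the smallest ordering > on simple types containing >_S and the right-subterm relation, and monotone in the right argument of arrows, has the property that the transitive closure of > ∪ ⊳_l is well-founded (where ⊳_l is the left-subterm relation T→U ⊳_l T). -/

import Mathlib

inductive Ty (S : Type*) : Type _
  | sort (A : S) : Ty S
  | arrow (T U : Ty S) : Ty S

/-- Left subterm relation: `T→U ⊳_l T`. -/
def Ty.leftSub {S : Type*} (a b : Ty S) : Prop := ∃ U, a = Ty.arrow b U

/-- The smallest ordering on types containing the sort ordering `gtS`
and the right-subterm relation, monotone in the right argument of arrows,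
and transitive. -/
inductive TyGt {S : Type*} (gtS : S → S → Prop) : Ty S → Ty S → Prop
  | sort {A B : S} : gtS A B → TyGt gtS (Ty.sort A) (Ty.sort B)
  | rsub (T U : Ty S) : TyGt gtS (Ty.arrow T U) U
  | mono {V V' : Ty S} (U : Ty S) : TyGt gtS V V' →
      TyGt gtS (Ty.arrow U V) (Ty.arrow U V')
  | trans {a b c : Ty S} : TyGt gtS a b → TyGt gtS b c → TyGt gtS a c

/-- Ordinal interpretation of a type. -/
noncomputable def tyRank {S : Type*} {gtS : S → S → Prop}
    (hwf : WellFounded (fun a b : S => gtS b a)) : Ty S → Ordinal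
  | Ty.sort A => (hwf.apply A).rank
  | Ty.arrow T U => tyRank hwf T + tyRank hwf U + 1

theorem tyRank_lt_of_tyGt {S : Type*} {gtS : S → S → Prop}
    (hwf : WellFounded (fun a b : S => gtS b a)) {x y : Ty S}
    (h : TyGt gtS x y) : tyRank hwf y < tyRank hwf x := by
  induction h with
  | sort hAB => exact Acc.rank_lt_of_rel (hwf.apply _) hAB
  | rsub T U =>
      calc tyRank hwf U ≤ tyRank hwf T + tyRank hwf U := le_add_self
        _ < tyRank hwf T + tyRank hwf U + 1 := (Ordinal.add_one_eq_succ _) ▸ Order.lt_succ _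
  | mono U _ ih =>
      have := Order.succ_lt_succ ((add_lt_add_iff_left (tyRank hwf U)).2 ih)
      show _ + _ + 1 < _ + _ + 1
      rw [Ordinal.add_one_eq_succ, Ordinal.add_one_eq_succ]; exact this
  | trans _ _ ih1 ih2 => exact ih2.trans ih1

theorem tyRank_lt_of_step {S : Type*} {gtS : S → S → Prop}
    (hwf : WellFounded (fun a b : S => gtS b a)) {x y : Ty S}
    (h : TyGt gtS x y ∨ Ty.leftSub x y) : tyRank hwf y < tyRank hwf x := by
  rcases h with h | ⟨U, rfl⟩
  · exact tyRank_lt_of_tyGt hwf h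
  · calc tyRank hwf y ≤ tyRank hwf y + tyRank hwf U := le_self_add
      _ < tyRank hwf y + tyRank hwf U + 1 := (Ordinal.add_one_eq_succ _) ▸ Order.lt_succ _

theorem tyGt_typ_sn {S : Type*} (gtS : S → S → Prop)
    (hwf : WellFounded (fun a b : S => gtS b a)) :
    WellFounded (fun a b : Ty S =>
      Relation.TransGen (fun x y => TyGt gtS x y ∨ Ty.leftSub x y) b a) := by
  have : Subrelation
      (fun a b : Ty S =>
        Relation.TransGen (fun x y => TyGt gtS x y ∨ Ty.leftSub x y) b a)
      (InvImage (· < ·) (tyRank hwf)) := by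
    intro a b h
    induction h with
    | single h => exact tyRank_lt_of_step hwf h
    | tail _ h ih => exact lt_trans (tyRank_lt_of_step hwf h) ih
  exact this.wf (InvImage.wf _ Ordinal.lt_wf)
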